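/- Define V : ℝ × (0,1) → ℝ⁴ by V(s,t) = (s, (2t−1)(s²−1), −2s/√(t(1−t)), (2t−1)/√(t(1−t))). Then V is injective, and V is an exact Lagrangian parametrization with primitive f(s,t) = −4·(s²−1)·√(t(1−t)): at every (s,t) ∈ ℝ × (0,1), writing V = (x₁,x₂,ξ₁,ξ₂), one has ξ₁·(∂x₁/∂s) + ξ₂·(∂x₂/∂s) = ∂f/∂s (both sides equal −8s·√(t(1−t))) and ξ₁·(∂x₁/∂t) + ξ₂·(∂x₂/∂t) = ∂f/∂t (both sides equal 2(s²−1)(2t−1)/√(t(1−t))). -/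

import Mathlib

/-- The local model `L₁` of the conjugate Lagrangian filling in the vertex-reduction
move: `V(s,t) = (s, (2t−1)(s²−1), −2s/√(t(1−t)), (2t−1)/√(t(1−t)))`. -/
noncomputable def vertexRedModel (p : ℝ × ℝ) : ℝ × ℝ × ℝ × ℝ :=
  (p.1, (2 * p.2 - 1) * (p.1 ^ 2 - 1),
   -2 * p.1 / Real.sqrt (p.2 * (1 - p.2)),
   (2 * p.2 - 1) / Real.sqrt (p.2 * (1 - p.2)))

lemma vr_sqrt_pos {t : ℝ} (ht : t ∈ Set.Ioo (0 : ℝ) 1) :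
    0 < Real.sqrt (t * (1 - t)) := by
  apply Real.sqrt_pos.2
  nlinarith [ht.1, ht.2]

lemma vr_hasDerivAt_f_s (s c : ℝ) :
    HasDerivAt (fun s' : ℝ => -4 * (s' ^ 2 - 1) * c) (-8 * s * c) s := by
  have h : HasDerivAt (fun s' : ℝ => -4 * (s' ^ 2 - 1) * c)
      (-4 * (2 * s ^ 1) * c) s :=
    (((hasDerivAt_pow 2 s).sub_const 1).const_mul (-4)).mul_const c
  convert h using 1
  ring

lemma vr_hasDerivAt_f_t (s t : ℝ) (ht : t ∈ Set.Ioo (0 : ℝ) 1) :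
    HasDerivAt (fun t' : ℝ => -4 * (s ^ 2 - 1) * Real.sqrt (t' * (1 - t')))
      (2 * (s ^ 2 - 1) * (2 * t - 1) / Real.sqrt (t * (1 - t))) t := by
  have hpos : 0 < t * (1 - t) := by nlinarith [ht.1, ht.2]
  have hr : 0 < Real.sqrt (t * (1 - t)) := vr_sqrt_pos ht
  have hg : HasDerivAt (fun t' : ℝ => t' * (1 - t')) (1 - 2 * t) t := by
    have h := (hasDerivAt_id t).mul ((hasDerivAt_const t (1:ℝ)).sub (hasDerivAt_id t))
    refine h.congr_deriv ?_
    simp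
    ring
  have hs : HasDerivAt (fun t' : ℝ => Real.sqrt (t' * (1 - t')))
      (1 / (2 * Real.sqrt (t * (1 - t))) * (1 - 2 * t)) t :=
    (Real.hasDerivAt_sqrt (ne_of_gt hpos)).comp t hg
  have h := hs.const_mul (-4 * (s ^ 2 - 1))
  refine h.congr_deriv ?_
  field_simp
  ring

/-- `V` is injective on `ℝ × (0,1)` and is an exact Lagrangian
parametrization with primitive `f(s,t) = −4(s²−1)√(t(1−t))`: in the `s`-direction both
sides of `Φ*λ_st = df` equal `−8s√(t(1−t))`, and in the `t`-direction both sides equal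
`2(s²−1)(2t−1)/√(t(1−t))`. -/
theorem vertexRedModel_injective_exact :
    Set.InjOn vertexRedModel (Set.univ ×ˢ Set.Ioo (0 : ℝ) 1) ∧
    ∀ s t : ℝ, t ∈ Set.Ioo (0 : ℝ) 1 →
      ((-2 * s / Real.sqrt (t * (1 - t))) * deriv (fun s' : ℝ => s') s
          + ((2 * t - 1) / Real.sqrt (t * (1 - t))) *
            deriv (fun s' : ℝ => (2 * t - 1) * (s' ^ 2 - 1)) s
        = deriv (fun s' : ℝ => -4 * (s' ^ 2 - 1) * Real.sqrt (t * (1 - t))) s) ∧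
      (deriv (fun s' : ℝ => -4 * (s' ^ 2 - 1) * Real.sqrt (t * (1 - t))) s
        = -8 * s * Real.sqrt (t * (1 - t))) ∧
      ((-2 * s / Real.sqrt (t * (1 - t))) * deriv (fun _ : ℝ => s) t
          + ((2 * t - 1) / Real.sqrt (t * (1 - t))) *
            deriv (fun t' : ℝ => (2 * t' - 1) * (s ^ 2 - 1)) t
        = deriv (fun t' : ℝ => -4 * (s ^ 2 - 1) * Real.sqrt (t' * (1 - t'))) t) ∧
      (deriv (fun t' : ℝ => -4 * (s ^ 2 - 1) * Real.sqrt (t' * (1 - t'))) t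
        = 2 * (s ^ 2 - 1) * (2 * t - 1) / Real.sqrt (t * (1 - t))) := by
  constructor
  · rintro ⟨s, t⟩ ⟨-, ht⟩ ⟨u, v⟩ ⟨-, hv⟩ h
    simp only [vertexRedModel, Prod.mk.injEq] at h
    obtain ⟨h1, h2, h3, h4⟩ := h
    have hpt : 0 < t * (1 - t) := by nlinarith [ht.1, ht.2]
    have hpv : 0 < v * (1 - v) := by nlinarith [hv.1, hv.2]
    have hat : 0 < Real.sqrt (t * (1 - t)) := vr_sqrt_pos ht
    have hav : 0 < Real.sqrt (v * (1 - v)) := vr_sqrt_pos hv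
    have ha2 : Real.sqrt (t * (1 - t)) * Real.sqrt (t * (1 - t)) = t * (1 - t) :=
      Real.mul_self_sqrt hpt.le
    have hb2 : Real.sqrt (v * (1 - v)) * Real.sqrt (v * (1 - v)) = v * (1 - v) :=
      Real.mul_self_sqrt hpv.le
    have h4' : (2 * t - 1) * Real.sqrt (v * (1 - v))
        = (2 * v - 1) * Real.sqrt (t * (1 - t)) := by
      field_simp at h4
      linarith [h4]
    have hAB : t * (1 - t) = v * (1 - v) := by
      have hsq := congrArg (· ^ 2) h4'
      simp only [mul_pow] at hsq
      have hs1 : Real.sqrt (v * (1 - v)) ^ 2 = v * (1 - v) := by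
        rw [sq]; exact hb2
      have hs2 : Real.sqrt (t * (1 - t)) ^ 2 = t * (1 - t) := by
        rw [sq]; exact ha2
      rw [hs1, hs2] at hsq
      nlinarith [hsq]
    have hab : Real.sqrt (t * (1 - t)) = Real.sqrt (v * (1 - v)) := by
      rw [hAB]
    have htv : t = v := by
      rw [← hab] at h4'
      have := mul_right_cancel₀ (ne_of_gt hat) h4'
      linarith
    exact Prod.ext h1 htv
  · intro s t ht
    have hpos : 0 < t * (1 - t) := by nlinarith [ht.1, ht.2]
    have hr : 0 < Real.sqrt (t * (1 - t)) := vr_sqrt_pos ht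
    have hr2 : Real.sqrt (t * (1 - t)) * Real.sqrt (t * (1 - t)) = t * (1 - t) :=
      Real.mul_self_sqrt hpos.le
    have hdfs := (vr_hasDerivAt_f_s s (Real.sqrt (t * (1 - t)))).deriv
    have hdft := (vr_hasDerivAt_f_t s t ht).deriv
    have hdx2s : deriv (fun s' : ℝ => (2 * t - 1) * (s' ^ 2 - 1)) s
        = (2 * t - 1) * (2 * s) := by
      have h : HasDerivAt (fun s' : ℝ => (2 * t - 1) * (s' ^ 2 - 1))
          ((2 * t - 1) * (2 * s ^ 1)) s :=
        ((hasDerivAt_pow 2 s).sub_const 1).const_mul (2 * t - 1)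
      simpa using h.deriv
    have hdx2t : deriv (fun t' : ℝ => (2 * t' - 1) * (s ^ 2 - 1)) t
        = 2 * (s ^ 2 - 1) := by
      have h : HasDerivAt (fun t' : ℝ => (2 * t' - 1) * (s ^ 2 - 1))
          (2 * (s ^ 2 - 1)) t := by
        have h2 : HasDerivAt (fun t' : ℝ => 2 * t' - 1) 2 t := by
          simpa using ((hasDerivAt_id t).const_mul 2).sub_const 1
        simpa using h2.mul_const (s ^ 2 - 1)
      exact h.deriv
    refine ⟨?_, hdfs, ?_, hdft⟩
    · rw [hdfs, hdx2s, deriv_id'']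
      field_simp
      rw [Real.sq_sqrt hpos.le]
      ring
    · rw [hdft, hdx2t, deriv_const]
      ring
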